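/- Two palindromes of odd length in the free group F_n are conjugate if and only if they are equal. -/

import Mathlib

/-- An element of a free group is a palindrome if its reduced word reads the
same backwards as forwards. -/
def IsPalindrome {n : ℕ} (g : FreeGroup (Fin n)) : Prop :=
  g.toWord.reverse = g.toWord

set_option linter.unusedSectionVars false
namespace PalAux
open FreeGroup List

variable {α : Type*} [DecidableEq α]

/-- inverse of a letter -/
def bar (a : α × Bool) : α × Bool := (a.1, !a.2)

@[simp] lemma bar_bar (a : α × Bool) : bar (bar a) = a := by simp [bar]

lemma bar_ne_self (a : α × Bool) : bar a ≠ a := by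
  simp [bar, Prod.ext_iff]

lemma bar_inj {a b : α × Bool} (h : bar a = bar b) : a = b := by
  have := congrArg bar h; simpa using this

@[simp] lemma invRev_cons (a : α × Bool) (l : List (α × Bool)) :
    invRev (a :: l) = invRev l ++ [bar a] := by
  cases a; simp [invRev, bar]

@[simp] lemma invRev_nil : invRev ([] : List (α × Bool)) = [] := rfl

@[simp] lemma invRev_singleton (a : α × Bool) : invRev [a] = [bar a] := by
  cases a; simp [invRev, bar]

/-- the reducedness predicate -/
def Red' (L : List (α × Bool)) : Prop := List.Chain' (fun a b => b ≠ bar a) L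

lemma Red'.reduce_eq {L : List (α × Bool)} (h : Red' L) : reduce L = L := by
  induction L with
  | nil => rfl
  | cons x L ih =>
    have hL : reduce L = L := ih h.tail
    rw [reduce.cons, hL]
    cases L with
    | nil => rfl
    | cons hd tl =>
      have hrel : hd ≠ bar x := List.isChain_cons_cons.mp h |>.1
      have : ¬(x.1 = hd.1 ∧ x.2 = !hd.2) := by
        rintro ⟨h1, h2⟩
        exact hrel (by simp [bar, Prod.ext_iff, h1.symm, h2])
      simp [this]

lemma red'_reduce (L : List (α × Bool)) : Red' (reduce L) := by
  by_contra hc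
  rw [Red', List.Chain', List.isChain_iff_getElem] at hc
  push_neg at hc
  obtain ⟨i, hi, hrel⟩ := hc
  set M := reduce L with hM
  have hi1 : i + 1 < M.length := by omega
  have hi0 : i < M.length := by omega
  have hdecomp : M = M.take i ++ (M[i].1, M[i].2) :: (M[i].1, !M[i].2) :: M.drop (i+2) := by
    conv_lhs => rw [← List.take_append_drop i M]
    congr 1
    rw [List.drop_eq_getElem_cons hi0, List.drop_eq_getElem_cons hi1]
    have : M[i+1] = bar M[i] := by simpa using hrel
    rw [this]
    rfl
  exact reduce.not hdecomp

lemma red'_toWord (x : FreeGroup α) : Red' x.toWord := by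
  rw [← reduce_toWord]; exact red'_reduce _

lemma toWord_mk_of_red' {L : List (α × Bool)} (h : Red' L) : (mk L).toWord = L := by
  rw [toWord_mk, h.reduce_eq]

lemma Red'.infix {L M : List (α × Bool)} (h : Red' L) (hm : M <:+: L) : Red' M :=
  List.IsChain.infix h hm

@[simp] lemma mk_singleton_inv (a : α × Bool) : (mk [a])⁻¹ = mk [bar a] := by
  rw [inv_mk]; simp



/-- cyclically reduced -/
def CR (w : List (α × Bool)) : Prop := w ≠ [] ∧ Red' (w ++ w)

lemma CR.red' {w : List (α × Bool)} (h : CR w) : Red' w :=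
  h.2.infix ⟨[], w, by simp⟩

lemma CR.boundary {w : List (α × Bool)} (h : CR w) :
    ∀ a ∈ w.getLast?, ∀ b ∈ w.head?, b ≠ bar a :=
  (List.isChain_append.mp h.2).2.2

lemma CR.rotate {w : List (α × Bool)} (h : CR w) (r : ℕ) : CR (w.rotate r) := by
  have hk : 0 < w.length := List.length_pos_iff.mpr h.1
  constructor
  · simpa [← List.length_pos_iff] using hk
  · rw [← List.rotate_mod]
    set m := r % w.length with hm
    have hmle : m ≤ w.length := (Nat.mod_lt _ hk).le

    have h3 : Red' (w ++ w ++ w) := by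
      obtain ⟨c1, c2, bd⟩ := List.isChain_append.mp h.2
      refine List.isChain_append.mpr ⟨h.2, c1, ?_⟩
      intro x hx y hy
      simp only [List.getLast?_append, Option.or_self] at hx
      exact bd x hx y hy
    obtain ⟨t, d, hw', hrot⟩ : ∃ t d, w = t ++ d ∧ w.rotate m = d ++ t :=
      ⟨_, _, (List.take_append_drop m w).symm, List.rotate_eq_drop_append_take hmle⟩
    rw [hrot]
    rw [hw'] at h3
    refine h3.infix ⟨t, d, ?_⟩
    simp [List.append_assoc]



lemma mk_cons (a : α × Bool) (l : List (α × Bool)) : mk (a :: l) = mk [a] * mk l := by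
  rw [mul_mk]; rfl

lemma mk_bar_mul (a : α × Bool) : mk [bar a] * mk [a] = 1 := by
  rw [← mk_singleton_inv]; exact inv_mul_cancel _

lemma mk_mul_bar (a : α × Bool) : mk [a] * mk [bar a] = 1 := by
  rw [← mk_singleton_inv]; exact mul_inv_cancel _

lemma red'_sandwich {W : List (α × Bool)} (hW : Red' W) (hne : W ≠ []) (a : α × Bool)
    (hh : ∀ c ∈ W.head?, c ≠ bar a) (hl : ∀ c ∈ W.getLast?, a ≠ c) :
    Red' (a :: (W ++ [bar a])) := by
  obtain ⟨c, W', rfl⟩ := List.exists_cons_of_ne_nil hne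
  have h1 : Red' ((c :: W') ++ [bar a]) := by
    refine List.isChain_append.mpr ⟨hW, List.isChain_singleton _, ?_⟩
    intro x hx y hy
    simp only [List.head?_cons, Option.mem_some_iff] at hy
    subst hy
    intro hcon
    exact hl x hx (bar_inj hcon.symm).symm
  refine List.isChain_cons.mpr ⟨?_, h1⟩
  intro y hy
  simp only [List.cons_append, List.head?_cons, Option.mem_some_iff] at hy
  subst hy
  exact hh c (by simp)

lemma rotate_one_inj {β : Type*} {l l' : List β} (hlen : l.length = l'.length)
    (h : l.rotate 1 = l'.rotate 1) : l = l' := by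
  rcases Nat.eq_zero_or_pos l.length with h0 | h0
  · have hl1 : l = [] := List.length_eq_zero_iff.mp h0
    have hl2 : l' = [] := List.length_eq_zero_iff.mp (by omega)
    rw [hl1, hl2]
  · have e1 : 1 + (l.length - 1) = l.length := by omega
    have := congrArg (fun t => t.rotate (l.length - 1)) h
    simp only [List.rotate_rotate] at this
    rw [e1, List.rotate_length, hlen, List.rotate_length] at this
    exact this

lemma mk_cancel_pair (x : α × Bool) (L : List (α × Bool)) : mk (x :: bar x :: L) = mk L := by
  have h1 : mk [x, bar x] = (1 : FreeGroup α) := by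
    have h2 : ([x] ++ [bar x] : List (α × Bool)) = [x, bar x] := rfl
    rw [← h2, ← mul_mk, mk_mul_bar]
  calc mk (x :: bar x :: L) = mk ([x, bar x] ++ L) := rfl
    _ = mk [x, bar x] * mk L := (mul_mk).symm
    _ = mk L := by rw [h1, one_mul]

lemma mk_cancel_pair' (x : α × Bool) (L : List (α × Bool)) : mk (bar x :: x :: L) = mk L := by
  simpa using mk_cancel_pair (bar x) L

lemma mk_cancel_mid' (L1 L2 : List (α × Bool)) (x : α × Bool) :
    mk (L1 ++ bar x :: x :: L2) = mk (L1 ++ L2) := by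
  rw [← mul_mk, mk_cancel_pair', mul_mk]

lemma conj_last (dl : List (α × Bool)) (x : α × Bool) :
    mk [x] * mk (dl ++ [x]) * (mk [x])⁻¹ = mk (x :: dl) := by
  rw [mk_singleton_inv, mul_mk, mul_mk]
  have h : ([x] ++ (dl ++ [x])) ++ [bar x] = (x :: dl) ++ (x :: bar x :: []) := by simp
  rw [h, ← mul_mk, mk_cancel_pair, ← one_eq_mk, mul_one]

/-- normal form for conjugates of a cyclically reduced word -/
def Form (w : List (α × Bool)) (u : FreeGroup α) : Prop :=
  ∃ z r, Red' (z ++ w.rotate r ++ invRev z) ∧ u = mk (z ++ w.rotate r ++ invRev z)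

lemma Form.conj_letter {w : List (α × Bool)} (hw : CR w) (a : α × Bool) {u : FreeGroup α}
    (hu : Form w u) : Form w (mk [a] * u * (mk [a])⁻¹) := by
  obtain ⟨z, r, hred, rfl⟩ := hu
  have hk : 0 < w.length := List.length_pos_iff.mpr hw.1
  cases z with
  | nil =>
    simp only [List.nil_append, invRev_nil, List.append_nil] at hred ⊢
    have hv : CR (w.rotate r) := hw.rotate r
    have hvne : w.rotate r ≠ [] := hv.1
    obtain ⟨d, t, hdt⟩ := List.exists_cons_of_ne_nil hvne
    by_cases h1 : a = bar d
    · refine ⟨[], r + 1, by simpa using (hw.rotate (r+1)).red', ?_⟩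
      have hrot1 : w.rotate (r+1) = t ++ [d] := by
        rw [← List.rotate_rotate, hdt, List.rotate_cons_succ, List.rotate_zero]
      simp only [List.nil_append, invRev_nil, List.append_nil]
      rw [h1, mk_singleton_inv, mul_mk, mul_mk, hdt, hrot1]
      show mk (bar d :: d :: (t ++ [bar (bar d)])) = mk (t ++ [d])
      rw [mk_cancel_pair' d, bar_bar]
    · by_cases h2 : a = (w.rotate r).getLast hvne
      · obtain ⟨dl, x, hdlx⟩ : ∃ dl x, w.rotate r = dl ++ [x] :=
          ⟨_, _, (List.dropLast_append_getLast hvne).symm⟩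
        have hax : a = x := by
          have e1 : (w.rotate r).getLast? = some ((w.rotate r).getLast hvne) :=
            List.getLast?_eq_getLast hvne
          have e2 : (w.rotate r).getLast? = some x := by
            rw [hdlx]; simp
          exact h2.trans (Option.some_inj.mp (e1.symm.trans e2))
        refine ⟨[], r + (w.length - 1),
          by simpa using (hw.rotate (r + (w.length - 1))).red', ?_⟩
        have hlenv : (w.rotate r).length = w.length := by simp
        have heq : w.rotate (r + (w.length - 1)) = a :: dl := by
          apply rotate_one_inj
          · have : dl.length + 1 = w.length := by
              rw [← hlenv, hdlx]; simp
            simp [this]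
          · rw [List.rotate_rotate, List.rotate_cons_succ, List.rotate_zero, hax, ← hdlx]
            have h3 : r + (w.length - 1) + 1 = r + w.length := by omega
            rw [h3, ← List.rotate_rotate, ← hlenv, List.rotate_length]
        simp only [List.nil_append, invRev_nil, List.append_nil]
        rw [heq, hdlx, ← hax]
        exact conj_last dl a
      · refine ⟨[a], r, ?_, ?_⟩
        · have hh : ∀ c ∈ (w.rotate r).head?, c ≠ bar a := by
            intro c hc hcon
            rw [hdt] at hc
            simp only [List.head?_cons, Option.mem_some_iff] at hc
            subst hc
            exact h1 (by rw [hcon, bar_bar])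
          have hl : ∀ c ∈ (w.rotate r).getLast?, a ≠ c := by
            intro c hc
            rw [List.getLast?_eq_getLast hvne, Option.mem_some_iff] at hc
            subst hc
            exact h2
          simpa [List.append_assoc] using red'_sandwich hv.red' hvne a hh hl
        · rw [inv_mk, mul_mk, mul_mk]
  | cons c z' =>
    obtain ⟨M, hM⟩ : ∃ M, M = z' ++ w.rotate r ++ invRev z' := ⟨_, rfl⟩
    have hWeq : (c :: z') ++ w.rotate r ++ invRev (c :: z') = c :: (M ++ [bar c]) := by
      rw [hM]; simp [List.append_assoc]
    by_cases hac : a = bar c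
    · refine ⟨z', r, ?_, ?_⟩
      · rw [hWeq] at hred
        rw [← hM]
        exact hred.infix ⟨[c], [bar c], by simp⟩
      · rw [hWeq, hac, mk_singleton_inv, mul_mk, mul_mk]
        have hl1 : ([bar c] ++ (c :: (M ++ [bar c]))) ++ [bar (bar c)]
            = bar c :: c :: (M ++ bar c :: c :: []) := by simp
        rw [hl1, mk_cancel_pair' c, mk_cancel_mid' M [] c, List.append_nil, hM]
    · refine ⟨a :: c :: z', r, ?_, ?_⟩
      · have hne : (c :: z') ++ w.rotate r ++ invRev (c :: z') ≠ [] := by simp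
        have hh : ∀ x ∈ ((c :: z') ++ w.rotate r ++ invRev (c :: z')).head?, x ≠ bar a := by
          intro x hx hcon
          rw [hWeq] at hx
          simp only [List.head?_cons, Option.mem_some_iff] at hx
          subst hx
          exact hac (by rw [hcon, bar_bar])
        have hl : ∀ x ∈ ((c :: z') ++ w.rotate r ++ invRev (c :: z')).getLast?, a ≠ x := by
          intro x hx
          rw [hWeq] at hx
          have h6 : (c :: (M ++ [bar c])).getLast? = some (bar c) := by
            rw [List.getLast?_cons, List.getLast?_append]
            simp
          rw [h6, Option.mem_some_iff] at hx
          subst hx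
          exact hac
        have h7 := red'_sandwich hred hne a hh hl
        rw [hWeq] at h7
        have hgoal : (a :: c :: z') ++ w.rotate r ++ invRev (a :: c :: z')
            = a :: ((c :: (M ++ [bar c])) ++ [bar a]) := by
          rw [hM]; simp [List.append_assoc]
        show Red' ((a :: c :: z') ++ w.rotate r ++ invRev (a :: c :: z'))
        rw [hgoal]
        exact h7
      · rw [inv_mk, mul_mk, mul_mk]
        congr 1
        simp [List.append_assoc]



lemma form_conj {w : List (α × Bool)} (hw : CR w) (x : FreeGroup α) :
    ∀ u, Form w u → Form w (x * u * x⁻¹) := by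
  refine FreeGroup.induction_on
    (C := fun x => ∀ u, Form w u → Form w (x * u * x⁻¹)) x ?_ ?_ ?_ ?_
  · intro u hu; simpa using hu
  · intro i u hu
    have hp : (of i : FreeGroup α) = mk [(i, true)] := rfl
    rw [hp]
    exact hu.conj_letter hw _
  · intro i _ u hu
    have hp : ((of i : FreeGroup α))⁻¹ = mk [(i, false)] := by
      have : (of i : FreeGroup α) = mk [(i, true)] := rfl
      rw [this, inv_mk]
      rfl
    rw [hp]
    exact hu.conj_letter hw _
  · intro x y hx hy u hu
    have : x * y * u * (x * y)⁻¹ = x * (y * u * y⁻¹) * x⁻¹ := by group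
    rw [this]
    exact hx _ (hy _ hu)

lemma pal_CR {g : FreeGroup α} (hg : g.toWord.reverse = g.toWord) (hne : g.toWord ≠ []) :
    CR g.toWord := by
  refine ⟨hne, List.isChain_append.mpr ⟨red'_toWord g, red'_toWord g, ?_⟩⟩
  intro x hx y hy
  have hgl : g.toWord.getLast? = g.toWord.head? := by rw [← List.head?_reverse, hg]
  rw [Option.mem_def] at hx hy
  rw [hgl] at hx
  have hxy : x = y := Option.some_inj.mp (hx.symm.trans hy)
  subst hxy
  exact fun hcon => bar_ne_self x hcon.symm

lemma toWord_conj_rotate {g h : FreeGroup α} (hgK : CR g.toWord)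
    (hh : h.toWord.reverse = h.toWord) (hne : h.toWord ≠ []) (hconj : IsConj g h) :
    ∃ r, h.toWord = g.toWord.rotate r := by
  obtain ⟨x, hx⟩ := isConj_iff.mp hconj
  have hbase : Form g.toWord g :=
    ⟨[], 0, by simpa using hgK.red', by simp [FreeGroup.mk_toWord]⟩
  have hform : Form g.toWord h := by
    rw [← hx]; exact form_conj hgK x g hbase
  obtain ⟨z, r, hred, heq⟩ := hform
  have hword : h.toWord = z ++ g.toWord.rotate r ++ invRev z := by
    rw [heq, toWord_mk_of_red' hred]
  cases z with
  | nil => exact ⟨r, by simpa using hword⟩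
  | cons c z' =>
    exfalso
    have hhead : h.toWord.head? = some c := by rw [hword]; simp
    have hlast : h.toWord.getLast? = some (bar c) := by
      rw [hword, List.getLast?_append]
      simp
    have hgl : h.toWord.getLast? = h.toWord.head? := by rw [← List.head?_reverse, hh]
    rw [hlast, hhead] at hgl
    exact bar_ne_self c (Option.some_inj.mp hgl)

lemma pal_getElem {β : Type*} {v : List β} (hv : v.reverse = v) {a : ℕ} (ha : a < v.length) :
    v[v.length - 1 - a]'(by omega) = v[a] := by
  have h2 : v.reverse[a]'(by simpa using ha) = v[v.length - 1 - a]'(by omega) :=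
    List.getElem_reverse _
  have h3 : v.reverse[a]'(by simpa using ha) = v[a] := List.getElem_of_eq hv _
  rw [← h2, h3]

lemma rotate_palindrome_eq {β : Type*} {w : List β} {r : ℕ} (hodd : Odd w.length)
    (h1 : w.reverse = w) (h2 : (w.rotate r).reverse = w.rotate r) : w.rotate r = w := by
  have hk0 : w.length ≠ 0 := by
    intro hcon; rw [hcon] at hodd; simp at hodd
  set k := w.length with hk
  haveI : NeZero k := ⟨hk0⟩
  have hkpos : 0 < k := Nat.pos_of_ne_zero hk0
  have hval : ∀ i : ZMod k, i.val < w.length := fun i => ZMod.val_lt i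
  set u : ZMod k → β := fun i => w[i.val]'(hval i) with hu
  have cast_val : ∀ i : ZMod k, ((i.val : ℕ) : ZMod k) = i := fun i => ZMod.natCast_rightInverse i
  have unat : ∀ (a : ℕ) (ha : a < k), u (a : ZMod k) = w[a]'(by omega) := by
    intro a ha
    have hv : ((a : ℕ) : ZMod k).val = a := by rw [ZMod.val_natCast]; exact Nat.mod_eq_of_lt ha
    simp only [hu, hv]
  have unat' : ∀ (a : ℕ), u (a : ZMod k) = w[a % k]'(by rw [← hk]; exact Nat.mod_lt _ hkpos) := by
    intro a
    rw [← ZMod.natCast_mod a k, unat _ (Nat.mod_lt _ hkpos)]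
  have hneg : ∀ i : ZMod k, ((k - 1 - i.val : ℕ) : ZMod k) = -1 - i := by
    intro i
    have hi : i.val < k := ZMod.val_lt i
    have hsum : (k - 1 - i.val) + (1 + i.val) = k := by omega
    have h3 : (((k - 1 - i.val) + (1 + i.val) : ℕ) : ZMod k) = 0 := by
      rw [hsum]; exact ZMod.natCast_self k
    rw [Nat.cast_add, Nat.cast_add, Nat.cast_one, cast_val] at h3
    linear_combination h3
  have hA : ∀ i : ZMod k, u (-1 - i) = u i := by
    intro i
    have hi : i.val < k := ZMod.val_lt i
    rw [← hneg i, unat _ (by omega)]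
    exact pal_getElem h1 (hval i)
  have hB : ∀ i : ZMod k, u (-1 - i + r) = u (i + r) := by
    intro i
    have hi : i.val < k := ZMod.val_lt i
    have hp := pal_getElem h2 (a := i.val) (by rw [List.length_rotate]; exact hval i)
    rw [List.getElem_rotate, List.getElem_rotate] at hp
    have e1 : u (((w.rotate r).length - 1 - i.val + r : ℕ) : ZMod k)
        = u ((i.val + r : ℕ) : ZMod k) :=
      (unat' _).trans (hp.trans (unat' _).symm)
    have hX : (w.rotate r).length - 1 - i.val + r = (k - 1 - i.val) + r := by
      rw [List.length_rotate]
    rw [hX, Nat.cast_add, Nat.cast_add, hneg, cast_val] at e1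
    exact e1
  have hC : ∀ j : ZMod k, u (j + 2 * (r : ZMod k)) = u j := by
    intro j
    have hb := hB (-1 - j - (r : ZMod k))
    have e1 : -1 - (-1 - j - (r : ZMod k)) + (r : ZMod k) = j + 2 * r := by ring
    have e2 : (-1 - j - (r : ZMod k)) + (r : ZMod k) = -1 - j := by ring
    rw [e1, e2] at hb
    rw [hb, hA]
  have hD : ∀ (m : ℕ) (j : ZMod k), u (j + 2 * (r : ZMod k) * m) = u j := by
    intro m
    induction m with
    | zero => intro j; simp
    | succ m ih =>
      intro j
      have e : j + 2 * (r : ZMod k) * ((m : ℕ) + 1 : ℕ) = (j + 2 * r) + 2 * (r : ZMod k) * m := by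
        push_cast; ring
      rw [e, ih, hC]
  have hhalf : (2 : ZMod k) * (((k + 1) / 2 : ℕ) : ZMod k) = 1 := by
    have h21 : 2 * ((k + 1) / 2) = k + 1 := by
      obtain ⟨m, hm⟩ := hodd
      omega
    have h3 := congrArg (Nat.cast : ℕ → ZMod k) h21
    push_cast at h3
    rw [ZMod.natCast_self] at h3
    simpa using h3
  have hF : ∀ j : ZMod k, u (j + r) = u j := by
    intro j
    have hd := hD ((k + 1) / 2) j
    rw [show 2 * (r : ZMod k) * ((((k + 1) / 2 : ℕ) : ZMod k))
        = (r : ZMod k) * (2 * (((k + 1) / 2 : ℕ) : ZMod k)) from by ring, hhalf, mul_one] at hd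
    exact hd
  apply List.ext_getElem (by simp)
  intro i hi1 hi2
  have hik : i < k := by rw [hk]; simpa using hi2
  calc (w.rotate r)[i]'hi1
      = w[(i + r) % w.length]'(Nat.mod_lt _ (by omega)) := List.getElem_rotate w r i hi1
    _ = u ((i + r : ℕ) : ZMod k) := (unat' (i + r)).symm
    _ = u ((i : ZMod k) + (r : ZMod k)) := by rw [Nat.cast_add]
    _ = u (i : ZMod k) := hF _
    _ = w[i]'hi2 := unat i hik

end PalAux

/-- Two palindromes of odd length in a free group are conjugate iff they are
equal. -/
theorem odd_palindromes_conj_iff_eq {n : ℕ} (g h : FreeGroup (Fin n))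
    (hg : IsPalindrome g) (hh : IsPalindrome h)
    (hgodd : Odd g.toWord.length) (hhodd : Odd h.toWord.length) :
    IsConj g h ↔ g = h := by
  constructor
  · intro hconj
    have hg' : g.toWord.reverse = g.toWord := hg
    have hh' : h.toWord.reverse = h.toWord := hh
    have hgne : g.toWord ≠ [] := by
      intro hcon; rw [hcon] at hgodd; simp at hgodd
    have hhne : h.toWord ≠ [] := by
      intro hcon; rw [hcon] at hhodd; simp at hhodd
    have hgK : PalAux.CR g.toWord := PalAux.pal_CR hg' hgne
    obtain ⟨r, hr⟩ := PalAux.toWord_conj_rotate hgK hh' hhne hconj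
    have hrot : g.toWord.rotate r = g.toWord :=
      PalAux.rotate_palindrome_eq hgodd hg' (by rw [← hr]; exact hh')
    have : h.toWord = g.toWord := by rw [hr, hrot]
    exact (FreeGroup.toWord_injective this).symm
  · rintro rfl
    exact IsConj.refl g
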